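/- With the domain setup below, for every Lipschitz path X in Ω from x to y and every ε > 0, there exists a Lipschitz path Y in Ω from x to y such that Y(t) ∈ Ω° (the open interior) for all t ∈ (0,1) and ∫₀¹ ‖Y'(t)‖² dt ≤ ∫₀¹ ‖X'(t)‖² dt + ε. -/

import Mathlib

open MeasureTheory Set
open scoped ENNReal

noncomputable section

abbrev Euc (d : ℕ) := EuclideanSpace ℝ (Fin d)

/-- A Lipschitz path in `S` from `x` to `y`, parametrized over `[0,1]`. -/
def IsPathIn {d : ℕ} (S : Set (Euc d)) (x y : Euc d) (X : ℝ → Euc d) : Prop :=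
  (∃ K : NNReal, LipschitzWith K X) ∧ (∀ t ∈ Icc (0:ℝ) 1, X t ∈ S) ∧ X 0 = x ∧ X 1 = y

/-- Euclidean length of a path. -/
def pathLength {d : ℕ} (X : ℝ → Euc d) : ℝ≥0∞ :=
  ∫⁻ t in Ioo (0:ℝ) 1, ENNReal.ofReal ‖deriv X t‖

/-- Kinetic energy of a path. -/
def pathEnergy {d : ℕ} (X : ℝ → Euc d) : ℝ≥0∞ :=
  ∫⁻ t in Ioo (0:ℝ) 1, ENNReal.ofReal (‖deriv X t‖ ^ 2)

/-- Geodesic distance in `S` (inf over the empty set is `⊤`). -/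
def dGeo {d : ℕ} (S : Set (Euc d)) (x y : Euc d) : ℝ≥0∞ :=
  ⨅ X : {X : ℝ → Euc d // IsPathIn S x y X}, pathLength X.1

/-- Minimal energy in `S`. -/
def eGeo {d : ℕ} (S : Set (Euc d)) (x y : Euc d) : ℝ≥0∞ :=
  ⨅ X : {X : ℝ → Euc d // IsPathIn S x y X}, pathEnergy X.1

/-- The Lagrangian `L_a`. -/
def La {d : ℕ} (Φ : Euc d → ℝ) (a : ℝ) (x v : Euc d) : ℝ≥0∞ :=
  if Φ x < 0 then ENNReal.ofReal (‖v‖ ^ 2 / 2)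
  else if Φ x = 0 ∧ inner ℝ (gradient Φ x) v = (0:ℝ) then ENNReal.ofReal (‖v‖ ^ 2 / (2 * a))
  else ⊤

/-- Action of a path for the Lagrangian `L_a`. -/
def actionA {d : ℕ} (Φ : Euc d → ℝ) (a : ℝ) (X : ℝ → Euc d) : ℝ≥0∞ :=
  ∫⁻ t in Ioo (0:ℝ) 1, La Φ a (X t) (deriv X t)

/-- The squared distance `d_a²`. -/
def daSq {d : ℕ} (Φ : Euc d → ℝ) (a : ℝ) (x y : Euc d) : ℝ≥0∞ :=
  ⨅ X : {X : ℝ → Euc d // IsPathIn {z | Φ z ≤ 0} x y X}, actionA Φ a X.1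

open Metric Bornology
open scoped NNReal

/-- Auxiliary: a product of a bounded Lipschitz scalar function and a bounded Lipschitz
vector-valued function is Lipschitz. -/
lemma stmt10.lipsmul {E : Type*} [NormedAddCommGroup E] [NormedSpace ℝ E]
    {f : ℝ → ℝ} {g : ℝ → E} {Kf Kg Bf Bg : ℝ≥0}
    (hf : LipschitzWith Kf f) (hg : LipschitzWith Kg g)
    (hbf : ∀ t, |f t| ≤ (Bf : ℝ)) (hbg : ∀ t, ‖g t‖ ≤ (Bg : ℝ)) :
    LipschitzWith (Bf * Kg + Kf * Bg) (fun t => f t • g t) := by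
  apply LipschitzWith.of_dist_le_mul
  intro s t
  have hsplit : f s • g s - f t • g t = f s • (g s - g t) + (f s - f t) • g t := by
    rw [smul_sub, sub_smul]; abel
  have h1 : ‖f s • (g s - g t)‖ ≤ (Bf : ℝ) * ((Kg : ℝ) * dist s t) := by
    rw [norm_smul, Real.norm_eq_abs]
    have := hg.dist_le_mul s t
    rw [dist_eq_norm] at this
    exact mul_le_mul (hbf s) this (norm_nonneg _) Bf.coe_nonneg
  have h2 : ‖(f s - f t) • g t‖ ≤ ((Kf : ℝ) * dist s t) * (Bg : ℝ) := by
    rw [norm_smul, Real.norm_eq_abs]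
    have := hf.dist_le_mul s t
    rw [Real.dist_eq] at this
    exact mul_le_mul this (hbg t) (norm_nonneg _) (mul_nonneg Kf.coe_nonneg dist_nonneg)
  calc dist (f s • g s) (f t • g t) = ‖f s • g s - f t • g t‖ := dist_eq_norm _ _
    _ = ‖f s • (g s - g t) + (f s - f t) • g t‖ := by rw [hsplit]
    _ ≤ ‖f s • (g s - g t)‖ + ‖(f s - f t) • g t‖ := norm_add_le _ _
    _ ≤ (Bf : ℝ) * ((Kg : ℝ) * dist s t) + ((Kf : ℝ) * dist s t) * (Bg : ℝ) := add_le_add h1 h2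
    _ = ((Bf * Kg + Kf * Bg : ℝ≥0) : ℝ) * dist s t := by push_cast; ring

set_option maxHeartbeats 1000000 in
/-- With the smooth compact domain setup, every Lipschitz path in `Ω`
from `x` to `y` can be approximated, at arbitrarily small extra energy cost, by a
Lipschitz path with the same endpoints running in the open interior `Ω°` for all
`t ∈ (0,1)`. -/
theorem stmt10 {d : ℕ} (hd : 2 ≤ d) (Φ : Euc d → ℝ) (hΦ : ContDiff ℝ (⊤ : ℕ∞) Φ)
    (hcomp : IsCompact {z : Euc d | Φ z ≤ 0}) (hne : {z : Euc d | Φ z ≤ 0}.Nonempty)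
    (hgrad : ∀ z : Euc d, Φ z = 0 → gradient Φ z ≠ 0)
    (hconn : IsConnected {z : Euc d | Φ z < 0})
    (hclos : closure {z : Euc d | Φ z < 0} = {z : Euc d | Φ z ≤ 0})
    (x y : Euc d) (X : ℝ → Euc d) (hX : IsPathIn {z : Euc d | Φ z ≤ 0} x y X)
    (ε : ℝ) (hε : 0 < ε) :
    ∃ Y : ℝ → Euc d, IsPathIn {z : Euc d | Φ z ≤ 0} x y Y ∧
      (∀ t ∈ Ioo (0:ℝ) 1, Φ (Y t) < 0) ∧
      pathEnergy Y ≤ pathEnergy X + ENNReal.ofReal ε := by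
  classical
  obtain ⟨⟨K, hK⟩, hmem, hX0, hX1⟩ := hX
  -- the clamp function
  set σ : ℝ → ℝ := fun t => min (max t 0) 1 with hσdef
  have hσlip : LipschitzWith 1 σ := (LipschitzWith.id.max_const 0).min_const 1
  have hσ01 : ∀ t, σ t ∈ Icc (0:ℝ) 1 :=
    fun t => ⟨le_min (le_max_right _ _) zero_le_one, min_le_right _ _⟩
  have hσeq : ∀ t ∈ Icc (0:ℝ) 1, σ t = t := by
    intro t ht
    simp only [hσdef, max_eq_left ht.1, min_eq_left ht.2]
  -- the clamped path
  set Xc : ℝ → Euc d := fun t => X (σ t) with hXcdef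
  have hXclip : LipschitzWith K Xc := by
    have := hK.comp hσlip
    rw [mul_one] at this
    exact this
  have hXcmem : ∀ t, Φ (Xc t) ≤ 0 := fun t => hmem _ (hσ01 t)
  -- the gradient field
  set G : Euc d → Euc d := gradient Φ with hGdef
  have hΦdiff : Differentiable ℝ Φ := hΦ.differentiable (by simp)
  have hGsmooth : ContDiff ℝ (⊤ : ℕ∞) G := by
    have h1 : ContDiff ℝ (⊤ : ℕ∞) (fderiv ℝ Φ) := hΦ.fderiv_right (by exact_mod_cast le_top)
    exact ((InnerProductSpace.toDual ℝ (Euc d)).symm.contDiff).comp h1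
  have hGcont : Continuous G := hGsmooth.continuous
  have hgi : ∀ u v : Euc d, (inner ℝ (G u) v : ℝ) = fderiv ℝ Φ u v := fun u v =>
    InnerProductSpace.toDual_symm_apply
  -- ambient ball
  obtain ⟨R0, hR0⟩ := hcomp.isBounded.subset_closedBall (0 : Euc d)
  set R : ℝ := max R0 0 with hRdef
  have hR0' : 0 ≤ R := le_max_right _ _
  have hΩR : ∀ z : Euc d, Φ z ≤ 0 → ‖z‖ ≤ R := by
    intro z hz
    have := hR0 hz
    rw [mem_closedBall_zero_iff] at this
    exact this.trans (le_max_left _ _)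
  set B : Set (Euc d) := closedBall (0 : Euc d) (R + 1) with hBdef
  have hBcomp : IsCompact B := isCompact_closedBall _ _
  have hΩB : ∀ z : Euc d, Φ z ≤ 0 → z ∈ B := by
    intro z hz
    rw [hBdef, mem_closedBall_zero_iff]
    linarith [hΩR z hz]
  -- Lipschitz constants on B
  have hGfd : ContDiff ℝ (⊤ : ℕ∞) (fderiv ℝ G) := hGsmooth.fderiv_right (by exact_mod_cast le_top)
  obtain ⟨CG0, hCG0⟩ := hBcomp.exists_bound_of_continuousOn hGfd.continuous.continuousOn
  set LG : ℝ≥0 := Real.toNNReal CG0 with hLGdef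
  have hLG : LipschitzOnWith LG G B := by
    apply Convex.lipschitzOnWith_of_nnnorm_fderiv_le
      (fun z _ => (hGsmooth.differentiable (by simp)) z) ?_
      (convex_closedBall _ _)
    intro z hz
    rw [← NNReal.coe_le_coe, coe_nnnorm, hLGdef, Real.coe_toNNReal']
    exact (hCG0 z hz).trans (le_max_left _ _)
  have hΦfd : ContDiff ℝ (⊤ : ℕ∞) (fderiv ℝ Φ) := hΦ.fderiv_right (by exact_mod_cast le_top)
  obtain ⟨CΦ0, hCΦ0⟩ := hBcomp.exists_bound_of_continuousOn hΦfd.continuous.continuousOn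
  set LΦ : ℝ≥0 := Real.toNNReal CΦ0 with hLΦdef
  have hLΦ : LipschitzOnWith LΦ Φ B := by
    apply Convex.lipschitzOnWith_of_nnnorm_fderiv_le (fun z _ => hΦdiff z) ?_
      (convex_closedBall _ _)
    intro z hz
    rw [← NNReal.coe_le_coe, coe_nnnorm, hLΦdef, Real.coe_toNNReal']
    exact (hCΦ0 z hz).trans (le_max_left _ _)
  -- bound on the gradient
  obtain ⟨M0, hM0⟩ := hBcomp.exists_bound_of_continuousOn hGcont.continuousOn
  set M : ℝ := max M0 1 with hMdef
  have hM1 : (1:ℝ) ≤ M := le_max_right _ _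
  have hMpos : (0:ℝ) < M := lt_of_lt_of_le one_pos hM1
  have hMG : ∀ z ∈ B, ‖G z‖ ≤ M := fun z hz => (hM0 z hz).trans (le_max_left _ _)
  -- the margin η below which the gradient cannot vanish
  have hηex : ∃ η : ℝ, 0 < η ∧ ∀ z : Euc d, Φ z ≤ 0 → G z = 0 → Φ z < -η := by
    set Kc : Set (Euc d) := {z | Φ z ≤ 0} ∩ G ⁻¹' {0} with hKcdef
    have hKcc : IsCompact Kc := hcomp.inter_right (isClosed_singleton.preimage hGcont)
    by_cases hne2 : Kc.Nonempty
    · obtain ⟨z₀, hz₀mem, hz₀max⟩ := hKcc.exists_isMaxOn hne2 (hΦ.continuous.continuousOn)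
      have hz₀le : Φ z₀ ≤ 0 := hz₀mem.1
      have hz₀G : G z₀ = 0 := hz₀mem.2
      have hz₀lt : Φ z₀ < 0 := by
        rcases lt_or_eq_of_le hz₀le with h | h
        · exact h
        · exact absurd hz₀G (hgrad z₀ h)
      refine ⟨-Φ z₀ / 2, by linarith, fun z hz hGz => ?_⟩
      have hle : Φ z ≤ Φ z₀ := hz₀max (⟨hz, hGz⟩ : z ∈ Kc)
      linarith
    · exact ⟨1, one_pos, fun z hz hGz => absurd ⟨hz, (hGz : G z ∈ ({0} : Set (Euc d)))⟩
        (fun h => hne2 ⟨z, h⟩)⟩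
  obtain ⟨η, hηpos, hηprop⟩ := hηex
  -- the lower bound m on the gradient near the boundary
  have hmex : ∃ m : ℝ, 0 < m ∧ ∀ z : Euc d, -η ≤ Φ z → Φ z ≤ 0 → m ≤ ‖G z‖ := by
    set K' : Set (Euc d) := {z | -η ≤ Φ z ∧ Φ z ≤ 0} with hK'def
    have hK'closed : IsClosed K' := by
      have : K' = Φ ⁻¹' (Icc (-η) 0) := rfl
      rw [this]
      exact (isClosed_Icc).preimage hΦ.continuous
    have hK'c : IsCompact K' :=
      hcomp.of_isClosed_subset hK'closed (fun z hz => hz.2)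
    by_cases hne2 : K'.Nonempty
    · obtain ⟨z₀, hz₀mem, hz₀min⟩ := hK'c.exists_isMinOn hne2
        ((continuous_norm.comp hGcont).continuousOn)
      have hz₀ne : G z₀ ≠ 0 := by
        intro h0
        have := hηprop z₀ hz₀mem.2 h0
        linarith [hz₀mem.1]
      exact ⟨‖G z₀‖, norm_pos_iff.mpr hz₀ne, fun z h1 h2 => hz₀min (⟨h1, h2⟩ : z ∈ K')⟩
    · exact ⟨1, one_pos, fun z h1 h2 => absurd ⟨h1, h2⟩ (fun h => hne2 ⟨z, h⟩)⟩
  obtain ⟨m, hmpos, hmprop⟩ := hmex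
  -- the bump profile
  set g₁ : ℝ → ℝ := fun t => σ t * (1 - σ t) with hg₁def
  have hg₁lip : LipschitzWith 1 g₁ := by
    apply LipschitzWith.of_dist_le_mul
    intro s t
    have h1 : g₁ s - g₁ t = (σ s - σ t) * (1 - (σ s + σ t)) := by ring
    have h2 : |1 - (σ s + σ t)| ≤ 1 := by
      rw [abs_le]
      constructor <;> [linarith [(hσ01 s).2, (hσ01 t).2]; linarith [(hσ01 s).1, (hσ01 t).1]]
    have h3 : |σ s - σ t| ≤ dist s t := by
      have := hσlip.dist_le_mul s t
      rwa [Real.dist_eq, NNReal.coe_one, one_mul] at this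
    calc dist (g₁ s) (g₁ t) = |g₁ s - g₁ t| := Real.dist_eq _ _
      _ = |σ s - σ t| * |1 - (σ s + σ t)| := by rw [h1, abs_mul]
      _ ≤ dist s t * 1 := mul_le_mul h3 h2 (abs_nonneg _) dist_nonneg
      _ = (1 : ℝ≥0) * dist s t := by rw [mul_one, NNReal.coe_one, one_mul]
  have hg₁nonneg : ∀ t, 0 ≤ g₁ t := fun t =>
    mul_nonneg (hσ01 t).1 (by linarith [(hσ01 t).2])
  have hg₁le1 : ∀ t, g₁ t ≤ 1 := by
    intro t
    have h1 := (hσ01 t).1; have h2 := (hσ01 t).2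
    show σ t * (1 - σ t) ≤ 1
    nlinarith
  have hg₁bd : ∀ t, |g₁ t| ≤ ((1 : ℝ≥0) : ℝ) := by
    intro t
    rw [abs_of_nonneg (hg₁nonneg t), NNReal.coe_one]
    exact hg₁le1 t
  have hg₁pos : ∀ t ∈ Ioo (0:ℝ) 1, 0 < g₁ t := by
    intro t ht
    rw [hg₁def]
    simp only [hσeq t (Ioo_subset_Icc_self ht)]
    nlinarith [ht.1, ht.2]
  have hg₁0 : g₁ 0 = 0 := by
    have : σ 0 = 0 := hσeq 0 ⟨le_refl _, zero_le_one⟩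
    simp [hg₁def, this]
  have hg₁1 : g₁ 1 = 0 := by
    have : σ 1 = 1 := hσeq 1 ⟨zero_le_one, le_refl _⟩
    simp [hg₁def, this]
  -- the gradient along the path
  set Mnn : ℝ≥0 := Real.toNNReal M with hMnndef
  have hMnn : (Mnn : ℝ) = M := Real.coe_toNNReal _ (le_of_lt hMpos)
  set GX : ℝ → Euc d := fun t => G (Xc t) with hGXdef
  have hGXlip : LipschitzWith (LG * K) GX := by
    apply LipschitzWith.of_dist_le_mul
    intro s t
    calc dist (GX s) (GX t) ≤ (LG : ℝ) * dist (Xc s) (Xc t) :=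
          hLG.dist_le_mul _ (hΩB _ (hXcmem s)) _ (hΩB _ (hXcmem t))
      _ ≤ (LG : ℝ) * ((K : ℝ) * dist s t) :=
          mul_le_mul_of_nonneg_left (hXclip.dist_le_mul s t) LG.coe_nonneg
      _ = ((LG * K : ℝ≥0) : ℝ) * dist s t := by push_cast; ring
  have hGXbd : ∀ t, ‖GX t‖ ≤ (Mnn : ℝ) := by
    intro t
    rw [hMnn]
    exact hMG _ (hΩB _ (hXcmem t))
  -- the correction path
  set C₁ : ℝ≥0 := 1 * (LG * K) + 1 * Mnn with hC₁def
  set Z₁ : ℝ → Euc d := fun t => g₁ t • GX t with hZ₁def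
  have hZ₁lip : LipschitzWith C₁ Z₁ := stmt10.lipsmul hg₁lip hGXlip hg₁bd hGXbd
  have hZ₁0 : Z₁ 0 = 0 := by simp [hZ₁def, hg₁0]
  have hZ₁1 : Z₁ 1 = 0 := by simp [hZ₁def, hg₁1]
  -- choice of δ
  set A : ℝ := 2 * (K : ℝ) * (C₁ : ℝ) + (C₁ : ℝ)^2 with hAdef
  have hA0 : 0 ≤ A := by positivity
  set δ : ℝ := min 1 (min (1/M) (min (η/(((LΦ : ℝ)+1)*M))
    (min (m^2/((((LG : ℝ))+1)*M^2)) (ε/(A+1))))) with hδdef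
  have hδpos : 0 < δ := by
    refine lt_min one_pos (lt_min (by positivity) (lt_min (div_pos hηpos (by positivity))
      (lt_min (div_pos (by positivity) (by positivity)) (div_pos hε (by positivity)))))
  have hδ1 : δ ≤ 1 := min_le_left _ _
  have hδM : δ * M ≤ 1 := by
    have h : δ ≤ 1/M := (min_le_right _ _).trans (min_le_left _ _)
    rw [le_div_iff₀ hMpos] at h
    exact h
  have hδΦ : (LΦ : ℝ) * (δ * M) < η := by
    have h : δ ≤ η/(((LΦ : ℝ)+1)*M) :=
      ((min_le_right _ _).trans (min_le_right _ _)).trans (min_le_left _ _)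
    rw [le_div_iff₀ (by positivity)] at h
    nlinarith [LΦ.coe_nonneg, mul_pos hδpos hMpos]
  have hδG : (LG : ℝ) * M^2 * δ < m^2 := by
    have h : δ ≤ m^2/((((LG : ℝ))+1)*M^2) :=
      (((min_le_right _ _).trans (min_le_right _ _)).trans (min_le_right _ _)).trans
        (min_le_left _ _)
    rw [le_div_iff₀ (by positivity)] at h
    nlinarith [LG.coe_nonneg, mul_pos hδpos (mul_pos hMpos hMpos)]
  have hδε : δ * A ≤ ε := by
    have h : δ ≤ ε/(A+1) :=
      (((min_le_right _ _).trans (min_le_right _ _)).trans (min_le_right _ _)).trans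
        (min_le_right _ _)
    rw [le_div_iff₀ (by positivity)] at h
    nlinarith
  -- the new path
  set Y : ℝ → Euc d := fun t => Xc t - δ • Z₁ t with hYdef
  have hY0 : Y 0 = x := by
    have hσ0 : σ 0 = 0 := hσeq 0 ⟨le_refl _, zero_le_one⟩
    simp [hYdef, hZ₁0, hXcdef, hσ0, hX0]
  have hY1 : Y 1 = y := by
    have hσ1 : σ 1 = 1 := hσeq 1 ⟨zero_le_one, le_refl _⟩
    simp [hYdef, hZ₁1, hXcdef, hσ1, hX1]
  -- key interiority claim
  have hKey : ∀ t ∈ Ioo (0:ℝ) 1, Φ (Y t) < 0 := by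
    intro t ht
    set z : Euc d := Xc t with hzdef
    have hz : Φ z ≤ 0 := hXcmem t
    set s₁ : ℝ := δ * g₁ t with hs₁def
    have hs₁pos : 0 < s₁ := mul_pos hδpos (hg₁pos t ht)
    have hs₁le : s₁ ≤ δ := by
      have := hg₁le1 t
      nlinarith
    set w : Euc d := G z with hwdef
    have hYt : Y t = z - s₁ • w := by
      rw [hYdef]
      simp only [hZ₁def, hGXdef, smul_smul, hs₁def, hzdef, hwdef]
    have hzB : z ∈ B := hΩB z hz
    have hznorm : ‖z‖ ≤ R := hΩR z hz
    have hwM : ‖w‖ ≤ M := hMG z hzB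
    have hmemB : ∀ s ∈ Icc (0:ℝ) s₁, z - s • w ∈ B := by
      intro s hs
      rw [hBdef, mem_closedBall_zero_iff]
      have h1 : ‖z - s • w‖ ≤ ‖z‖ + ‖s • w‖ := norm_sub_le _ _
      have h2 : ‖s • w‖ = s * ‖w‖ := by
        rw [norm_smul, Real.norm_eq_abs, abs_of_nonneg hs.1]
      have h3 : s * ‖w‖ ≤ δ * M :=
        mul_le_mul (hs.2.trans hs₁le) hwM (norm_nonneg _) (le_of_lt hδpos)
      linarith
    by_cases hcase : Φ z < -η
    · -- deep interior case
      have hYB : Y t ∈ B := by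
        rw [hYt]
        exact hmemB s₁ ⟨le_of_lt hs₁pos, le_refl _⟩
      have hdist := hLΦ.dist_le_mul (Y t) hYB z hzB
      have hYz : dist (Y t) z = s₁ * ‖w‖ := by
        rw [hYt, dist_eq_norm]
        simp only [sub_sub_cancel_left]
        rw [norm_neg, norm_smul, Real.norm_eq_abs, abs_of_nonneg (le_of_lt hs₁pos)]
      have h4 : s₁ * ‖w‖ ≤ δ * M :=
        mul_le_mul hs₁le hwM (norm_nonneg _) (le_of_lt hδpos)
      have h5 : (LΦ : ℝ) * dist (Y t) z ≤ (LΦ : ℝ) * (δ * M) := by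
        apply mul_le_mul_of_nonneg_left _ LΦ.coe_nonneg
        rw [hYz]; exact h4
      have h6 : |Φ (Y t) - Φ z| < η := by
        rw [← Real.dist_eq]
        calc dist (Φ (Y t)) (Φ z) ≤ (LΦ : ℝ) * dist (Y t) z := hdist
          _ ≤ (LΦ : ℝ) * (δ * M) := h5
          _ < η := hδΦ
      have := (abs_lt.mp h6).2
      linarith
    · -- near boundary case
      push_neg at hcase
      have hm' : m ≤ ‖w‖ := hmprop z hcase hz
      set ψ : ℝ → ℝ := fun s => Φ (z - s • w) + s * ‖w‖^2 with hψdef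
      set ψ' : ℝ → ℝ := fun s => -(inner ℝ (G (z - s • w)) w : ℝ) + ‖w‖^2 with hψ'def
      have hψD : ∀ s : ℝ, HasDerivAt ψ (ψ' s) s := by
        intro s
        have h1 : HasDerivAt (fun s : ℝ => z - s • w) (-w) s := by
          simpa using ((hasDerivAt_id s).smul_const w).const_sub z
        have h2 : HasDerivAt (fun s : ℝ => Φ (z - s • w))
            (fderiv ℝ Φ (z - s • w) (-w)) s :=
          (hΦdiff (z - s • w)).hasFDerivAt.comp_hasDerivAt s h1
        have h3 : HasDerivAt (fun s : ℝ => s * ‖w‖^2) (‖w‖^2) s := hasDerivAt_mul_const _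
        have h4 := h2.add h3
        have h5 : fderiv ℝ Φ (z - s • w) (-w) = -(inner ℝ (G (z - s • w)) w : ℝ) := by
          rw [← hgi, inner_neg_right]
        rw [h5] at h4
        exact h4
      have hbound : ∀ s ∈ Ico (0:ℝ) s₁, ‖ψ' s‖ ≤ (LG : ℝ) * (s₁ * M) * M := by
        intro s hs
        have hsmem : z - s • w ∈ B := hmemB s ⟨hs.1, le_of_lt hs.2⟩
        have h1 : ψ' s = (inner ℝ (w - G (z - s • w)) w : ℝ) := by
          rw [hψ'def]
          rw [inner_sub_left, real_inner_self_eq_norm_sq]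
          ring
        rw [h1, Real.norm_eq_abs]
        calc |(inner ℝ (w - G (z - s • w)) w : ℝ)| ≤ ‖w - G (z - s • w)‖ * ‖w‖ :=
            abs_real_inner_le_norm _ _
          _ ≤ ((LG : ℝ) * (s₁ * M)) * M := by
            have hGdist : ‖w - G (z - s • w)‖ ≤ (LG : ℝ) * (s₁ * M) := by
              calc ‖w - G (z - s • w)‖ = dist (G z) (G (z - s • w)) := by
                    rw [dist_eq_norm, hwdef]
                _ ≤ (LG : ℝ) * dist z (z - s • w) := hLG.dist_le_mul _ hzB _ hsmem
                _ ≤ (LG : ℝ) * (s₁ * M) := by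
                    apply mul_le_mul_of_nonneg_left _ LG.coe_nonneg
                    rw [dist_eq_norm, sub_sub_cancel]
                    rw [norm_smul, Real.norm_eq_abs, abs_of_nonneg hs.1]
                    exact mul_le_mul (le_of_lt hs.2) hwM (norm_nonneg _)
                      (le_of_lt hs₁pos)
            exact mul_le_mul hGdist hwM (norm_nonneg _)
              (mul_nonneg LG.coe_nonneg (mul_nonneg (le_of_lt hs₁pos) (le_of_lt hMpos)))
          _ = (LG : ℝ) * (s₁ * M) * M := by ring
      have hkey := norm_image_sub_le_of_norm_deriv_le_segment'
        (f := ψ) (f' := ψ') (a := 0) (b := s₁)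
        (fun s _ => (hψD s).hasDerivWithinAt) hbound s₁
        ⟨le_of_lt hs₁pos, le_refl _⟩
      have hψ0 : ψ 0 = Φ z := by
        have h : ψ 0 = Φ (z - (0:ℝ) • w) + 0 * ‖w‖^2 := rfl
        rw [h]; simp
      have hψs₁ : ψ s₁ = Φ (Y t) + s₁ * ‖w‖^2 := by
        have h : ψ s₁ = Φ (z - s₁ • w) + s₁ * ‖w‖^2 := rfl
        rw [h, ← hYt]
      rw [hψ0, hψs₁, Real.norm_eq_abs, sub_zero] at hkey
      have hkey2 : Φ (Y t) + s₁ * ‖w‖^2 - Φ z ≤ (LG : ℝ) * (s₁ * M) * M * s₁ :=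
        (abs_le.mp hkey).2.trans (le_refl _)
      have hwm2 : m^2 ≤ ‖w‖^2 := pow_le_pow_left₀ (le_of_lt hmpos) hm' 2
      have hs₁M : (LG : ℝ) * (s₁ * M) * M ≤ (LG : ℝ) * M^2 * s₁ := by
        have h : (LG : ℝ) * (s₁ * M) * M = (LG : ℝ) * M^2 * s₁ := by ring
        exact le_of_eq h
      have e1 : (LG : ℝ) * (s₁ * M) * M * s₁ ≤ ((LG : ℝ) * M^2 * s₁) * s₁ :=
        mul_le_mul_of_nonneg_right hs₁M (le_of_lt hs₁pos)
      have e1' : ((LG : ℝ) * M^2 * s₁) * s₁ ≤ ((LG : ℝ) * M^2 * δ) * s₁ := by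
        apply mul_le_mul_of_nonneg_right _ (le_of_lt hs₁pos)
        exact mul_le_mul_of_nonneg_left hs₁le (by positivity)
      have e2 : ((LG : ℝ) * M^2 * δ) * s₁ < m^2 * s₁ :=
        mul_lt_mul_of_pos_right hδG hs₁pos
      have e3 : m^2 * s₁ ≤ ‖w‖^2 * s₁ :=
        mul_le_mul_of_nonneg_right hwm2 (le_of_lt hs₁pos)
      have e4 : s₁ * ‖w‖^2 = ‖w‖^2 * s₁ := mul_comm _ _
      linarith only [hkey2, e1, e1', e2, e3, e4, hz]
  -- Y is a path in Ω
  have hYlip : LipschitzWith (K + ‖δ‖₊ * C₁) Y := by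
    have h1 : LipschitzWith (‖δ‖₊ * C₁) (fun t => δ • Z₁ t) :=
      (lipschitzWith_smul δ).comp hZ₁lip
    exact hXclip.sub h1
  have hYmem : ∀ t ∈ Icc (0:ℝ) 1, Y t ∈ {z : Euc d | Φ z ≤ 0} := by
    intro t ht
    rcases eq_or_lt_of_le ht.1 with h0 | h0
    · rw [← h0]
      show Φ (Y 0) ≤ 0
      rw [hY0]
      exact hmem 0 ⟨le_refl _, zero_le_one⟩ |>.out |> (fun h => by rwa [hX0] at h)
    · rcases eq_or_lt_of_le ht.2 with h1 | h1
      · rw [h1]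
        show Φ (Y 1) ≤ 0
        rw [hY1]
        have := hmem 1 ⟨zero_le_one, le_refl _⟩
        rwa [hX1] at this
      · exact le_of_lt (hKey t ⟨h0, h1⟩)
  -- energy estimate
  have hXd := hXclip.ae_differentiableAt_real
  have hZd := hZ₁lip.ae_differentiableAt_real
  set c : ℝ := δ * A with hcdef
  have hptwise : ∀ᵐ t ∂(volume.restrict (Ioo (0:ℝ) 1)),
      ENNReal.ofReal (‖deriv Y t‖ ^ 2) ≤ ENNReal.ofReal (‖deriv X t‖ ^ 2) +
        ENNReal.ofReal c := by
    filter_upwards [ae_restrict_mem measurableSet_Ioo, ae_restrict_of_ae hXd,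
      ae_restrict_of_ae hZd] with t ht hdX hdZ
    have hXceq : Xc =ᶠ[nhds t] X := by
      filter_upwards [Ioo_mem_nhds ht.1 ht.2] with s hs
      simp only [hXcdef, hσeq s (Ioo_subset_Icc_self hs)]
    have hderiveq : deriv Xc t = deriv X t := hXceq.deriv_eq
    have hYd : deriv Y t = deriv Xc t - δ • deriv Z₁ t := by
      have hre : Y = fun u => Xc u - δ • Z₁ u := rfl
      rw [hre, deriv_fun_sub (g := fun u => δ • Z₁ u) hdX (hdZ.const_smul δ), deriv_fun_const_smul δ hdZ]
    have h1 : ‖deriv X t‖ ≤ (K : ℝ) := by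
      rw [← hderiveq]
      exact norm_deriv_le_of_lipschitz hXclip
    have h2 : ‖deriv Z₁ t‖ ≤ (C₁ : ℝ) := norm_deriv_le_of_lipschitz hZ₁lip
    have h3 : ‖deriv Y t‖ ≤ ‖deriv X t‖ + δ * (C₁ : ℝ) := by
      rw [hYd, hderiveq]
      calc ‖deriv X t - δ • deriv Z₁ t‖ ≤ ‖deriv X t‖ + ‖δ • deriv Z₁ t‖ := norm_sub_le _ _
        _ ≤ ‖deriv X t‖ + δ * (C₁ : ℝ) := by
            apply add_le_add_right
            rw [norm_smul, Real.norm_eq_abs, abs_of_nonneg (le_of_lt hδpos)]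
            exact mul_le_mul_of_nonneg_left h2 (le_of_lt hδpos)
    have h4 : ‖deriv Y t‖ ^ 2 ≤ ‖deriv X t‖ ^ 2 + c := by
      have hδC : 0 ≤ δ * (C₁ : ℝ) := mul_nonneg (le_of_lt hδpos) C₁.coe_nonneg
      have hn1 : 0 ≤ ‖deriv X t‖ := norm_nonneg _
      have hn2 : 0 ≤ ‖deriv Y t‖ := norm_nonneg _
      have e0 : ‖deriv Y t‖ ^ 2 ≤ (‖deriv X t‖ + δ * (C₁ : ℝ)) ^ 2 := pow_le_pow_left₀ hn2 h3 2
      have e1 : (‖deriv X t‖ + δ * (C₁ : ℝ)) ^ 2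
          = ‖deriv X t‖ ^ 2 + 2 * ‖deriv X t‖ * (δ * (C₁ : ℝ)) + (δ * (C₁ : ℝ))^2 := by ring
      have e2 : 2 * ‖deriv X t‖ * (δ * (C₁ : ℝ)) ≤ 2 * (K : ℝ) * (δ * (C₁ : ℝ)) :=
        mul_le_mul_of_nonneg_right (by linarith only [h1]) hδC
      have e3 : (δ * (C₁ : ℝ))^2 ≤ δ * (C₁ : ℝ)^2 := by
        have h : (δ * (C₁ : ℝ))^2 = δ * (δ * (C₁ : ℝ)^2) := by ring
        rw [h]
        exact mul_le_mul_of_nonneg_left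
          (mul_le_of_le_one_left (sq_nonneg _) hδ1) (le_of_lt hδpos)
      have e5 : c = δ * (2 * (K : ℝ) * (C₁ : ℝ)) + δ * (C₁ : ℝ)^2 := by rw [hcdef, hAdef]; ring
      have e6 : 2 * (K : ℝ) * (δ * (C₁ : ℝ)) = δ * (2 * (K : ℝ) * (C₁ : ℝ)) := by ring
      linarith only [e0, e1, e2, e3, e5, e6]
    calc ENNReal.ofReal (‖deriv Y t‖ ^ 2) ≤ ENNReal.ofReal (‖deriv X t‖ ^ 2 + c) :=
        ENNReal.ofReal_le_ofReal h4
      _ ≤ ENNReal.ofReal (‖deriv X t‖ ^ 2) + ENNReal.ofReal c := ENNReal.ofReal_add_le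
  have henergy : pathEnergy Y ≤ pathEnergy X + ENNReal.ofReal ε := by
    have hcε : ENNReal.ofReal c ≤ ENNReal.ofReal ε := by
      apply ENNReal.ofReal_le_ofReal
      rw [hcdef]
      exact hδε
    calc pathEnergy Y = ∫⁻ t in Ioo (0:ℝ) 1, ENNReal.ofReal (‖deriv Y t‖ ^ 2) := rfl
      _ ≤ ∫⁻ t in Ioo (0:ℝ) 1,
            (ENNReal.ofReal (‖deriv X t‖ ^ 2) + ENNReal.ofReal c) := lintegral_mono_ae hptwise
      _ = (∫⁻ t in Ioo (0:ℝ) 1, ENNReal.ofReal (‖deriv X t‖ ^ 2)) +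
            ENNReal.ofReal c * volume (Ioo (0:ℝ) 1) := by
          rw [lintegral_add_right _ measurable_const, lintegral_const,
            Measure.restrict_apply_univ]
      _ = pathEnergy X + ENNReal.ofReal c := by
          rw [Real.volume_Ioo]
          norm_num
          simp [pathEnergy]
      _ ≤ pathEnergy X + ENNReal.ofReal ε := add_le_add_right hcε _
  exact ⟨Y, ⟨⟨K + ‖δ‖₊ * C₁, hYlip⟩, hYmem, hY0, hY1⟩, hKey, henergy⟩
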